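/- arXiv:1609.07358 — 10 statements merged into one kernel-verified Lean document; each statement's English description precedes it below -/
import Mathlib

section
/- Let θ0 ∈ (0,1] and let θ : ℕ → ℝ satisfy θ_0 = θ0 and θ_{k+1} = (√(θ_k⁴ + 4θ_k²) − θ_k²)/2 for all k ≥ 0. Then for every k ≥ 0 one has 1/(k + 1/θ0) ≤ θ_k ≤ 2/(k + 2/θ0). -/
theorem stmt_2 (θ0 : ℝ) (hθ0pos : 0 < θ0) (hθ0le : θ0 ≤ 1)
    (θ : ℕ → ℝ) (hinit : θ 0 = θ0)
    (hrec : ∀ k : ℕ, θ (k + 1) = (Real.sqrt ((θ k) ^ 4 + 4 * (θ k) ^ 2) - (θ k) ^ 2) / 2) :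
    ∀ k : ℕ, 1 / ((k : ℝ) + 1 / θ0) ≤ θ k ∧ θ k ≤ 2 / ((k : ℝ) + 2 / θ0) := by
  have key : ∀ x : ℝ, 0 < x →
      0 < (Real.sqrt (x ^ 4 + 4 * x ^ 2) - x ^ 2) / 2 ∧
      (Real.sqrt (x ^ 4 + 4 * x ^ 2) - x ^ 2) / 2 < x ∧
      ((Real.sqrt (x ^ 4 + 4 * x ^ 2) - x ^ 2) / 2) ^ 2 +
        x ^ 2 * ((Real.sqrt (x ^ 4 + 4 * x ^ 2) - x ^ 2) / 2) = x ^ 2 := by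
    intro x hx
    have hnn : (0:ℝ) ≤ x ^ 4 + 4 * x ^ 2 := by positivity
    have hs : (Real.sqrt (x ^ 4 + 4 * x ^ 2)) ^ 2 = x ^ 4 + 4 * x ^ 2 := Real.sq_sqrt hnn
    have hsnn : 0 ≤ Real.sqrt (x ^ 4 + 4 * x ^ 2) := Real.sqrt_nonneg _
    have h1 : x ^ 2 < Real.sqrt (x ^ 4 + 4 * x ^ 2) := by nlinarith [sq_nonneg x]
    refine ⟨by linarith, ?_, by linear_combination hs / 4⟩
    have h2 : Real.sqrt (x ^ 4 + 4 * x ^ 2) < 2 * x + x ^ 2 := by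
      nlinarith [mul_pos (mul_pos hx hx) hx]
    linarith
  intro k
  induction k with
  | zero =>
    rw [hinit]
    constructor
    · rw [Nat.cast_zero, zero_add, one_div_one_div]
    · rw [Nat.cast_zero, zero_add]
      rw [div_div_eq_mul_div, mul_comm, mul_div_assoc, div_self (by norm_num : (2:ℝ) ≠ 0),
        mul_one]
  | succ k ih =>
    have h1θ : 0 < 1 / θ0 := by positivity
    have h2θ : 0 < 2 / θ0 := by positivity
    have hknn : (0:ℝ) ≤ (k : ℝ) := Nat.cast_nonneg k
    have hd1 : 0 < (k : ℝ) + 1 / θ0 := by linarith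
    have hd2 : 0 < (k : ℝ) + 2 / θ0 := by linarith
    have hx : 0 < θ k := lt_of_lt_of_le (one_div_pos.mpr hd1) ih.1
    obtain ⟨hy0', hyx', heq'⟩ := key (θ k) hx
    rw [← hrec k] at hy0' hyx' heq'
    set x := θ k with hxdef
    set y := θ (k + 1) with hydef
    -- x - y ≤ x*y  and  x*y ≤ 2*(x - y)
    have hxy : 0 < x + y := by linarith
    have hC : x - y ≤ x * y := by
      nlinarith [heq', mul_pos (mul_pos hx hy0') hy0']
    have hB : x * y ≤ 2 * (x - y) := by
      nlinarith [heq', mul_pos (mul_pos hx hy0') (sub_pos.mpr hyx')]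
    constructor
    · -- lower bound
      have h1 : 1 ≤ x * ((k : ℝ) + 1 / θ0) := by
        have := (div_le_iff₀ hd1).mp ih.1
        linarith
      rw [Nat.cast_succ]
      rw [div_le_iff₀ (by linarith : 0 < (k : ℝ) + 1 + 1 / θ0)]
      nlinarith [mul_le_mul_of_nonneg_left h1 hy0'.le, hC, hx, hy0']
    · -- upper bound
      have h2 : x * ((k : ℝ) + 2 / θ0) ≤ 2 := by
        have := (le_div_iff₀ hd2).mp ih.2
        linarith
      rw [Nat.cast_succ]
      rw [le_div_iff₀ (by linarith : 0 < (k : ℝ) + 1 + 2 / θ0)]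
      nlinarith [mul_le_mul_of_nonneg_left h2 hy0'.le, hB, hx, hy0']
end

section
/- The FISTA iterates satisfy, for every k ≥ 1, (1/θ_{k−1}²)·(F(x_k) − F(x_*)) + (1/2)·‖z_k − x_*‖_v² ≤ (1/2)·‖x_0 − x_*‖_v². -/
open scoped RealInnerProductSpace

lemma Q_comb {n : ℕ} (v : Fin n → ℝ) (t : ℝ) (a b : EuclideanSpace ℝ (Fin n)) :
    ∑ i, v i * (((1-t) • a + t • b) i)^2
      = (1-t) * (∑ i, v i * (a i)^2) + t * (∑ i, v i * (b i)^2)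
        - t*(1-t) * ∑ i, v i * ((a - b) i)^2 := by
  simp only [Finset.mul_sum, ← Finset.sum_sub_distrib, ← Finset.sum_add_distrib]
  refine Finset.sum_congr rfl fun i _ => ?_
  simp only [PiLp.add_apply, PiLp.smul_apply, PiLp.sub_apply, smul_eq_mul]
  ring

lemma Q_smul {n : ℕ} (v : Fin n → ℝ) (t : ℝ) (a : EuclideanSpace ℝ (Fin n)) :
    ∑ i, v i * ((t • a) i)^2 = t^2 * ∑ i, v i * (a i)^2 := by
  simp only [Finset.mul_sum]
  refine Finset.sum_congr rfl fun i _ => ?_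
  simp only [PiLp.smul_apply, smul_eq_mul]
  ring

lemma Q_negsub {n : ℕ} (v : Fin n → ℝ) (a b : EuclideanSpace ℝ (Fin n)) :
    ∑ i, v i * ((a - b) i)^2 = ∑ i, v i * ((b - a) i)^2 := by
  refine Finset.sum_congr rfl fun i _ => ?_
  simp only [PiLp.sub_apply]
  ring

lemma theta_step {a b : ℝ} (ha : 0 < a)
    (hb : b = (Real.sqrt (a^4 + 4*a^2) - a^2)/2) :
    0 < b ∧ b < 1 ∧ b^2 = a^2 * (1 - b) := by
  set s := Real.sqrt (a^4 + 4*a^2) with hs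
  have hs2 : s^2 = a^4 + 4*a^2 := Real.sq_sqrt (by positivity)
  have hs0 : 0 ≤ s := Real.sqrt_nonneg _
  have hsgt : a^2 < s := by nlinarith
  have hbpos : 0 < b := by rw [hb]; linarith
  have hid : b^2 = a^2 * (1 - b) := by rw [hb]; linear_combination hs2 / 4
  have hblt : b < 1 := by nlinarith
  exact ⟨hbpos, hblt, hid⟩

lemma grad_ineq {n : ℕ} (f : EuclideanSpace ℝ (Fin n) → ℝ)
    (hf : ConvexOn ℝ Set.univ f) {y u gy : EuclideanSpace ℝ (Fin n)}
    (hg : HasGradientAt f gy y) : f y + ⟪gy, u - y⟫ ≤ f u := by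
  set φ : ℝ → ℝ := fun t => f (y + t • (u - y)) with hφdef
  have hline : HasDerivAt (fun t : ℝ => y + t • (u - y)) (u - y) 0 := by
    simpa using ((hasDerivAt_id (0:ℝ)).smul_const (u - y)).const_add y
  have hfd : HasFDerivAt f (InnerProductSpace.toDual ℝ _ gy)
      ((fun t : ℝ => y + t • (u - y)) 0) := by
    simpa using (hasGradientAt_iff_hasFDerivAt.1 hg)
  have hφ' : HasDerivAt φ ⟪gy, u - y⟫ 0 := by
    have hc := hfd.comp_hasDerivAt (0:ℝ) hline
    simp only [InnerProductSpace.toDual_apply_apply] at hc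
    exact hc
  suffices h : ⟪gy, u - y⟫ ≤ f u - f y by linarith
  have hslope : Filter.Tendsto (slope φ 0) (nhdsWithin 0 (Set.Ioi 0)) (nhds ⟪gy, u - y⟫) :=
    (hasDerivAt_iff_tendsto_slope.1 hφ').mono_left
      (nhdsWithin_mono _ (fun t ht => ne_of_gt ht))
  refine le_of_tendsto hslope ?_
  filter_upwards [Ioc_mem_nhdsGT (zero_lt_one)] with t ht
  obtain ⟨ht0, ht1⟩ := ht
  have hw : y + t • (u - y) = (1-t) • y + t • u := by module
  have hconv := hf.2 (Set.mem_univ y) (Set.mem_univ u) (by linarith : (0:ℝ) ≤ 1 - t)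
    ht0.le (by ring)
  have hφt : φ t ≤ (1-t) * f y + t * f u := by rw [hφdef]; simp only; rw [hw]; exact hconv
  have hφ0 : φ 0 = f y := by simp [hφdef]
  rw [slope_def_field, hφ0, sub_zero, div_le_iff₀ ht0]
  nlinarith

lemma strong_min {n : ℕ} (v : Fin n → ℝ)
    (ψ : EuclideanSpace ℝ (Fin n) → ℝ) (hψconv : ConvexOn ℝ Set.univ ψ)
    (gy yk xp : EuclideanSpace ℝ (Fin n))
    (hmin : ∀ u : EuclideanSpace ℝ (Fin n),
      ⟪gy, xp - yk⟫ + (1/2) * (∑ i, v i * ((xp - yk) i)^2) + ψ xp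
        ≤ ⟪gy, u - yk⟫ + (1/2) * (∑ i, v i * ((u - yk) i)^2) + ψ u)
    (u : EuclideanSpace ℝ (Fin n)) :
    ⟪gy, xp - yk⟫ + (1/2) * (∑ i, v i * ((xp - yk) i)^2) + ψ xp
        + (1/2) * (∑ i, v i * ((u - xp) i)^2)
      ≤ ⟪gy, u - yk⟫ + (1/2) * (∑ i, v i * ((u - yk) i)^2) + ψ u := by
  have key : ∀ t : ℝ, 0 < t → t ≤ 1 →
      ⟪gy, xp - yk⟫ + (1/2) * (∑ i, v i * ((xp - yk) i)^2) + ψ xp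
        + ((1-t)/2) * (∑ i, v i * ((u - xp) i)^2)
      ≤ ⟪gy, u - yk⟫ + (1/2) * (∑ i, v i * ((u - yk) i)^2) + ψ u := by
    intro t ht0 ht1
    have h1 := hmin ((1-t) • xp + t • u)
    have hvec : (1-t) • xp + t • u - yk = (1-t) • (xp - yk) + t • (u - yk) := by module
    rw [hvec, Q_comb] at h1
    have hvv : xp - yk - (u - yk) = xp - u := by module
    rw [hvv, Q_negsub v xp u, inner_add_right, real_inner_smul_right,
      real_inner_smul_right] at h1
    have hψb : ψ ((1-t) • xp + t • u) ≤ (1-t) * ψ xp + t * ψ u :=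
      hψconv.2 (Set.mem_univ xp) (Set.mem_univ u) (by linarith) ht0.le (by ring)
    have hmul : t * (⟪gy, xp - yk⟫ + (1/2) * (∑ i, v i * ((xp - yk) i)^2) + ψ xp
        + ((1-t)/2) * (∑ i, v i * ((u - xp) i)^2))
        ≤ t * (⟪gy, u - yk⟫ + (1/2) * (∑ i, v i * ((u - yk) i)^2) + ψ u) := by
      nlinarith [h1, hψb]
    exact le_of_mul_le_mul_left hmul ht0
  refine le_of_forall_pos_le_add ?_
  intro ε hε
  by_cases hQd : (∑ i, v i * ((u - xp) i)^2) ≤ 2*ε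
  · have h1 := key 1 one_pos le_rfl
    rw [show ((1:ℝ)-1)/2 = 0 by norm_num, zero_mul, add_zero] at h1
    linarith
  · push_neg at hQd
    set Qd := ∑ i, v i * ((u - xp) i)^2 with hQddef
    have hQdpos : 0 < Qd := by linarith
    have ht0 : 0 < 2*ε/Qd := by positivity
    have ht1 : 2*ε/Qd ≤ 1 := by rw [div_le_one hQdpos]; linarith
    have h1 := key (2*ε/Qd) ht0 ht1
    have heq : (1 - 2*ε/Qd)/2 * Qd = (1/2)*Qd - ε := by
      field_simp
    linarith

theorem stmt_4 {n : ℕ} (hn : 1 ≤ n)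
    (v : Fin n → ℝ) (hv : ∀ i, 0 < v i)
    (f ψ F : EuclideanSpace ℝ (Fin n) → ℝ)
    (g : EuclideanSpace ℝ (Fin n) → EuclideanSpace ℝ (Fin n))
    (hfconv : ConvexOn ℝ Set.univ f)
    (hgrad : ∀ x, HasGradientAt f (g x) x)
    (hdesc : ∀ x h : EuclideanSpace ℝ (Fin n),
      f (x + h) ≤ f x + ⟪g x, h⟫ + (1 / 2) * ∑ i, v i * (h i) ^ 2)
    (hψconv : ConvexOn ℝ Set.univ ψ)
    (hF : ∀ x, F x = f x + ψ x)
    (xstar : EuclideanSpace ℝ (Fin n)) (hxstar : ∀ x, F xstar ≤ F x)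
    (x y z : ℕ → EuclideanSpace ℝ (Fin n)) (θ : ℕ → ℝ)
    (hθinit : θ 0 = 1) (hzinit : z 0 = x 0)
    (hy : ∀ k, y k = (1 - θ k) • x k + θ k • z k)
    (hxmin : ∀ k, ∀ u : EuclideanSpace ℝ (Fin n),
      ⟪g (y k), x (k + 1) - y k⟫ + (1 / 2) * (∑ i, v i * ((x (k + 1) - y k) i) ^ 2)
          + ψ (x (k + 1))
        ≤ ⟪g (y k), u - y k⟫ + (1 / 2) * (∑ i, v i * ((u - y k) i) ^ 2) + ψ u)
    (hz : ∀ k, z (k + 1) = z k + (θ k)⁻¹ • (x (k + 1) - y k))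
    (hθrec : ∀ k : ℕ, θ (k + 1) = (Real.sqrt ((θ k) ^ 4 + 4 * (θ k) ^ 2) - (θ k) ^ 2) / 2) :
    ∀ k : ℕ, 1 ≤ k →
      (1 / (θ (k - 1)) ^ 2) * (F (x k) - F xstar)
          + (1 / 2) * ∑ i, v i * ((z k - xstar) i) ^ 2
        ≤ (1 / 2) * ∑ i, v i * ((x 0 - xstar) i) ^ 2 := by
  have hθpos : ∀ k, 0 < θ k ∧ θ k ≤ 1 := by
    intro k
    induction k with
    | zero => rw [hθinit]; exact ⟨one_pos, le_rfl⟩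
    | succ m ih =>
      obtain ⟨h1, h2, _⟩ := theta_step ih.1 (hθrec m)
      exact ⟨h1, h2.le⟩
  have hθid : ∀ k, (θ (k+1))^2 = (θ k)^2 * (1 - θ (k+1)) ∧ θ (k+1) < 1 := by
    intro k
    obtain ⟨_, h2, h3⟩ := theta_step (hθpos k).1 (hθrec k)
    exact ⟨h3, h2⟩
  have step : ∀ k, (1/(θ k)^2) * (F (x (k+1)) - F xstar)
      + (1/2) * ∑ i, v i * ((z (k+1) - xstar) i)^2
      ≤ ((1 - θ k)/(θ k)^2) * (F (x k) - F xstar)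
        + (1/2) * ∑ i, v i * ((z k - xstar) i)^2 := by
    intro k
    obtain ⟨hθk0, hθk1⟩ := hθpos k
    set u := (1 - θ k) • x k + θ k • xstar with hu
    have hdesc' := hdesc (y k) (x (k+1) - y k)
    rw [show y k + (x (k+1) - y k) = x (k+1) by module] at hdesc'
    have hsm := strong_min v ψ hψconv (g (y k)) (y k) (x (k+1)) (hxmin k) u
    have hgi := grad_ineq f hfconv (u := u) (hgrad (y k))
    have hfc := hfconv.2 (Set.mem_univ (x k)) (Set.mem_univ xstar)
      (by linarith : (0:ℝ) ≤ 1 - θ k) hθk0.le (by ring)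
    have hψc := hψconv.2 (Set.mem_univ (x k)) (Set.mem_univ xstar)
      (by linarith : (0:ℝ) ≤ 1 - θ k) hθk0.le (by ring)
    rw [← hu] at hfc hψc
    simp only [smul_eq_mul] at hfc hψc
    have e1 : u - y k = θ k • (xstar - z k) := by rw [hu, hy k]; module
    have h1 : θ k • (z (k+1) - z k) = x (k+1) - y k := by
      rw [hz k, add_sub_cancel_left, smul_smul, mul_inv_cancel₀ hθk0.ne', one_smul]
    have e2 : u - x (k+1) = θ k • (xstar - z (k+1)) := by
      have h3 : u - x (k+1) = (u - y k) - (x (k+1) - y k) := by module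
      rw [h3, e1, ← h1]; module
    rw [e1, e2, Q_smul, Q_smul, real_inner_smul_right] at hsm
    rw [e1, real_inner_smul_right] at hgi
    rw [Q_negsub v (xstar) (z (k+1)), Q_negsub v (xstar) (z k)] at hsm
    have key : F (x (k+1)) - F xstar
        + ((θ k)^2/2) * ∑ i, v i * ((z (k+1) - xstar) i)^2
        ≤ (1 - θ k) * (F (x k) - F xstar)
          + ((θ k)^2/2) * ∑ i, v i * ((z k - xstar) i)^2 := by
      have hF1 := hF (x (k+1)); have hF2 := hF (x k); have hF3 := hF xstar
      have hF4 := hF u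
      nlinarith [hdesc', hsm, hgi, hfc, hψc]
    have hpos : (0:ℝ) < (θ k)^2 := by positivity
    have hmul := mul_le_mul_of_nonneg_left key (le_of_lt (one_div_pos.mpr hpos))
    have e3 : (1/(θ k)^2) * (F (x (k+1)) - F xstar
        + ((θ k)^2/2) * ∑ i, v i * ((z (k+1) - xstar) i)^2)
        = (1/(θ k)^2) * (F (x (k+1)) - F xstar)
          + (1/2) * ∑ i, v i * ((z (k+1) - xstar) i)^2 := by
      field_simp
    have e4 : (1/(θ k)^2) * ((1 - θ k) * (F (x k) - F xstar)
        + ((θ k)^2/2) * ∑ i, v i * ((z k - xstar) i)^2)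
        = ((1 - θ k)/(θ k)^2) * (F (x k) - F xstar)
          + (1/2) * ∑ i, v i * ((z k - xstar) i)^2 := by
      field_simp
    linarith [hmul, e3.ge, e3.le, e4.ge, e4.le]
  have main : ∀ m : ℕ, (1/(θ m)^2) * (F (x (m+1)) - F xstar)
      + (1/2) * ∑ i, v i * ((z (m+1) - xstar) i)^2
      ≤ (1/2) * ∑ i, v i * ((x 0 - xstar) i)^2 := by
    intro m
    induction m with
    | zero =>
      have h := step 0
      rw [hθinit, hzinit] at h
      rw [hθinit]
      have h0 : ((1:ℝ)-1)/(1:ℝ)^2 = 0 := by norm_num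
      rw [h0, zero_mul, zero_add] at h
      simpa using h
    | succ m ih =>
      have h := step (m+1)
      obtain ⟨hid, hlt⟩ := hθid m
      have hθm := hθpos m
      have hθm1 := hθpos (m+1)
      have hcoef : (1 - θ (m+1))/(θ (m+1))^2 = 1/(θ m)^2 := by
        rw [div_eq_div_iff (pow_ne_zero 2 hθm1.1.ne') (pow_ne_zero 2 hθm.1.ne')]
        linear_combination -hid
      rw [hcoef] at h
      exact le_trans h ih
  intro k hk
  cases k with
  | zero => omega
  | succ m =>
    simpa only [Nat.add_sub_cancel] using main m
end

section
/- Let K ≥ 1 be a natural number, ρ ∈ [0,1] a real number, and d : ℕ → ℝ a sequence with d_k ≥ 0 for all k. Assume (i) for every k, d_k ≤ d_{K·⌊k/K⌋} (monotonicity between restarts), and (ii) for every m, d_{(m+1)·K} ≤ ρ·d_{m·K} (contraction at restarts). Then for every k ≥ K one has d_k ≤ (ρ^{1/K})^{k−K}·d_0, where powers are real powers. -/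
theorem stmt_11 (K : ℕ) (hK : 1 ≤ K) (ρ : ℝ) (hρ0 : 0 ≤ ρ) (hρ1 : ρ ≤ 1)
    (d : ℕ → ℝ) (hd : ∀ k, 0 ≤ d k)
    (hmono : ∀ k : ℕ, d k ≤ d (K * (k / K)))
    (hcontract : ∀ m : ℕ, d ((m + 1) * K) ≤ ρ * d (m * K)) :
    ∀ k : ℕ, K ≤ k →
      d k ≤ (ρ ^ ((1 : ℝ) / (K : ℝ))) ^ ((k : ℝ) - (K : ℝ)) * d 0 := by
  have hK0 : (0 : ℝ) < (K : ℝ) := by exact_mod_cast hK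
  have key : ∀ m : ℕ, d (m * K) ≤ ρ ^ m * d 0 := by
    intro m
    induction m with
    | zero => simp
    | succ n ih =>
        calc d ((n + 1) * K) ≤ ρ * d (n * K) := hcontract n
        _ ≤ ρ * (ρ ^ n * d 0) := by
            exact mul_le_mul_of_nonneg_left ih hρ0
        _ = ρ ^ (n + 1) * d 0 := by ring
  intro k hk
  set m := k / K with hm
  have hm1 : 1 ≤ m := (Nat.one_le_div_iff (by omega)).2 hk
  have hdk : d k ≤ ρ ^ m * d 0 := by
    calc d k ≤ d (K * (k / K)) := hmono k
    _ = d (m * K) := by rw [Nat.mul_comm]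
    _ ≤ ρ ^ m * d 0 := key m
  set b : ℝ := ρ ^ ((1 : ℝ) / (K : ℝ)) with hb
  have hb0 : 0 ≤ b := Real.rpow_nonneg hρ0 _
  rcases eq_or_lt_of_le hρ0 with h0 | hρpos
  · -- ρ = 0
    have hρ : ρ = 0 := h0.symm
    have : ρ ^ m = 0 := by
      rw [hρ]; exact zero_pow (by omega)
    have hdk0 : d k ≤ 0 := by rw [this, zero_mul] at hdk; exact hdk
    exact hdk0.trans (mul_nonneg (Real.rpow_nonneg hb0 _) (hd 0))
  · have hbpos : 0 < b := Real.rpow_pos_of_pos hρpos _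
    have hb1 : b ≤ 1 := Real.rpow_le_one hρ0 hρ1 (by positivity)
    -- k - K ≤ K * m
    have hle : (k : ℝ) - (K : ℝ) ≤ (K : ℝ) * (m : ℝ) := by
      have : k < K * m + K := by
        rw [hm]
        have h2 := Nat.div_add_mod k K
        have h3 := Nat.mod_lt k (show 0 < K by omega)
        omega
      have : (k : ℝ) < (K : ℝ) * (m : ℝ) + K := by exact_mod_cast this
      linarith
    have h1 : b ^ ((k : ℝ) - (K : ℝ)) ≥ b ^ ((K : ℝ) * (m : ℝ)) :=
      Real.rpow_le_rpow_of_exponent_ge hbpos hb1 hle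
    have h2 : b ^ ((K : ℝ) * (m : ℝ)) = ρ ^ m := by
      rw [hb, ← Real.rpow_natCast ρ m]
      rw [← Real.rpow_mul hρ0]
      congr 1
      field_simp
    calc d k ≤ ρ ^ m * d 0 := hdk
    _ ≤ b ^ ((k : ℝ) - (K : ℝ)) * d 0 := by
        rw [← h2]; exact mul_le_mul_of_nonneg_right h1 (hd 0)
end

section
/- With the coefficients γ_k^i and sequence θ as defined, for every k ≥ 0 and every i with 0 ≤ i ≤ k, one has γ_{k+1}^i = θ_k²·γ_{i+1}^i/θ_i². -/
theorem stmt_12 (c : ℝ) (hc : 1 ≤ c) (θ0 : ℝ) (hθ0 : θ0 = 1 / c)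
    (θ : ℕ → ℝ) (hθinit : θ 0 = θ0)
    (hθrec : ∀ k : ℕ, θ (k + 1) = (Real.sqrt ((θ k) ^ 4 + 4 * (θ k) ^ 2) - (θ k) ^ 2) / 2)
    (hθpos : ∀ k : ℕ, 0 < θ k)
    (γ : ℕ → ℕ → ℝ)
    (hγ00 : γ 0 0 = 1) (hγ10 : γ 1 0 = 0) (hγ11 : γ 1 1 = 1)
    (hγrec : ∀ k : ℕ, 1 ≤ k → ∀ i : ℕ, i ≤ k - 1 → γ (k + 1) i = (1 - θ k) * γ k i)
    (hγk : ∀ k : ℕ, 1 ≤ k →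
      γ (k + 1) k = θ k * (1 - c * θ (k - 1)) + c * (θ (k - 1) - θ k))
    (hγk1 : ∀ k : ℕ, 1 ≤ k → γ (k + 1) (k + 1) = c * θ k)
      :
    ∀ k : ℕ, ∀ i : ℕ, i ≤ k → γ (k + 1) i = (θ k) ^ 2 * γ (i + 1) i / (θ i) ^ 2 := by
  have key : ∀ k : ℕ, (θ (k + 1)) ^ 2 = (1 - θ (k + 1)) * (θ k) ^ 2 := by
    intro k
    have hnn : (0:ℝ) ≤ (θ k) ^ 4 + 4 * (θ k) ^ 2 := by positivity
    have h1 : 2 * θ (k + 1) + (θ k) ^ 2 = Real.sqrt ((θ k) ^ 4 + 4 * (θ k) ^ 2) := by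
      rw [hθrec k]; ring
    have h2 : (2 * θ (k + 1) + (θ k) ^ 2) ^ 2 = (θ k) ^ 4 + 4 * (θ k) ^ 2 := by
      rw [h1, Real.sq_sqrt hnn]
    nlinarith [h2]
  intro k
  induction k with
  | zero =>
    intro i hi
    interval_cases i
    have := (hθpos 0).ne'
    field_simp
  | succ k ih =>
    intro i hi
    rcases Nat.lt_or_ge i (k + 1) with h | h
    · have hi' : i ≤ k := Nat.lt_succ_iff.mp h
      have hr := hγrec (k + 1) (by omega) i (by omega)
      rw [hr, ih i hi', key k]
      ring
    · have hieq : i = k + 1 := le_antisymm hi h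
      subst hieq
      have := (hθpos (k + 1)).ne'
      field_simp
end

section
/- Define ξ_k = ∑_{i=0}^k γ_k^i/θ_{i−1}² for k ≥ 1, with the convention 1/θ_{−1}² := (1−θ0)/θ0². Then for every k ≥ 1, ξ_{k+1} = (1−θ_k)·ξ_k + (1 + (c−1)·θ_k)/θ_k. -/
theorem stmt_13 (c : ℝ) (hc : 1 ≤ c) (θ0 : ℝ) (hθ0 : θ0 = 1 / c)
    (θ : ℕ → ℝ) (hθinit : θ 0 = θ0)
    (hθrec : ∀ k : ℕ, θ (k + 1) = (Real.sqrt ((θ k) ^ 4 + 4 * (θ k) ^ 2) - (θ k) ^ 2) / 2)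
    (hθpos : ∀ k : ℕ, 0 < θ k)
    (γ : ℕ → ℕ → ℝ)
    (hγ00 : γ 0 0 = 1) (hγ10 : γ 1 0 = 0) (hγ11 : γ 1 1 = 1)
    (hγrec : ∀ k : ℕ, 1 ≤ k → ∀ i : ℕ, i ≤ k - 1 → γ (k + 1) i = (1 - θ k) * γ k i)
    (hγk : ∀ k : ℕ, 1 ≤ k →
      γ (k + 1) k = θ k * (1 - c * θ (k - 1)) + c * (θ (k - 1) - θ k))
    (hγk1 : ∀ k : ℕ, 1 ≤ k → γ (k + 1) (k + 1) = c * θ k)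
    (ξ : ℕ → ℝ)
    (hξ : ∀ k : ℕ, ξ k = ∑ i ∈ Finset.range (k + 1),
      γ k i * (if i = 0 then (1 - θ0) / θ0 ^ 2 else 1 / (θ (i - 1)) ^ 2))  :
    ∀ k : ℕ, 1 ≤ k → ξ (k + 1) = (1 - θ k) * ξ k + (1 + (c - 1) * θ k) / θ k := by
  have hc0 : (0:ℝ) < c := lt_of_lt_of_le one_pos hc
  have hsq : ∀ k, (θ (k+1))^2 = (θ k)^2 * (1 - θ (k+1)) := by
    intro k
    have harg : (0:ℝ) ≤ (θ k)^4 + 4*(θ k)^2 := by positivity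
    have hs : Real.sqrt ((θ k)^4 + 4*(θ k)^2) = 2 * θ (k+1) + (θ k)^2 := by
      rw [hθrec k]; ring
    have h2 := Real.sq_sqrt harg
    rw [hs] at h2
    nlinarith [h2]
  have hγkk : ∀ k : ℕ, 1 ≤ k → γ k k = c * θ (k-1) := by
    intro k hk
    match k, hk with
    | 1, _ =>
      simp only [hγ11, Nat.sub_self, hθinit, hθ0]
      field_simp
    | (n+2), _ =>
      simpa using hγk1 (n+1) (by omega)
  intro k hk
  rw [hξ (k+1), hξ k]
  rw [Finset.sum_range_succ (n := k+1), Finset.sum_range_succ (n := k),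
      Finset.sum_range_succ (n := k)]
  have hrw : ∀ i ∈ Finset.range k,
      γ (k+1) i * (if i = 0 then (1 - θ0) / θ0 ^ 2 else 1 / (θ (i - 1)) ^ 2)
      = (1 - θ k) * (γ k i * (if i = 0 then (1 - θ0) / θ0 ^ 2 else 1 / (θ (i - 1)) ^ 2)) := by
    intro i hi
    rw [hγrec k hk i (by have := Finset.mem_range.mp hi; omega)]
    ring
  rw [Finset.sum_congr rfl hrw, ← Finset.mul_sum]
  have hkne : k ≠ 0 := by omega
  have hk1ne : k + 1 ≠ 0 := by omega
  simp only [if_neg hkne, if_neg hk1ne, Nat.add_sub_cancel]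
  rw [hγk k hk, hγk1 k hk, hγkk k hk]
  have hpk : θ (k-1) > 0 := hθpos _
  have htk : θ k > 0 := hθpos _
  have hsqk : (θ k)^2 = (θ (k-1))^2 * (1 - θ k) := by
    have h := hsq (k-1)
    have hkk : k - 1 + 1 = k := by omega
    rwa [hkk] at h
  have key : (θ k * (1 - c * θ (k-1)) + c * (θ (k-1) - θ k)) * (1 / θ (k-1) ^ 2)
      + c * θ k * (1 / θ k ^ 2)
      = (1 - θ k) * (c * θ (k-1) * (1 / θ (k-1) ^ 2)) + (1 + (c - 1) * θ k) / θ k := by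
    field_simp
    linear_combination (1 - c) * hsqk
  linear_combination key
end

section
/- For every k ≥ 1 one has 1/(3·θ_k²) ≤ ξ_k ≤ 1/θ_k². -/
lemma aux_step (c a b : ℝ) (hc : 1 ≤ c) (ha : 0 < a) (hb : 0 < b) (ha1 : a < 1)
    (hid : b ^ 2 + a ^ 2 * b = a ^ 2) (hcb : c * b ≤ 1) (x : ℝ)
    (hl : 1 / (3 * a ^ 2) ≤ x) (hu : x ≤ 1 / a ^ 2) :
    1 / (3 * b ^ 2) ≤ (1 - a) * x + a * (1 - c) * (1 - a) / a ^ 2 + c / a ∧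
      (1 - a) * x + a * (1 - c) * (1 - a) / a ^ 2 + c / a ≤ 1 / b ^ 2 := by
  have hba : b ≤ a := by nlinarith [mul_pos (mul_pos ha ha) hb]
  constructor
  · have step2 : 1 / (3 * b ^ 2) ≤
        (1 - a) * (1 / (3 * a ^ 2)) + a * (1 - c) * (1 - a) / a ^ 2 + c / a := by
      have hcomb : (1 - a) * (1 / (3 * a ^ 2)) + a * (1 - c) * (1 - a) / a ^ 2 + c / a
          = ((1 - a) + 3 * a * (1 - c) * (1 - a) + 3 * c * a) / (3 * a ^ 2) := by
        field_simp
      rw [hcomb, div_le_div_iff₀ (by positivity) (by positivity)]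
      have hb34 : b ≤ 3/4 := by nlinarith
      have hab2 : a ≤ 2 * b := by
        nlinarith [mul_pos ha hb, sq_nonneg (a - 2*b), sq_nonneg (a + 2*b)]
      have key : a ^ 2 ≤ b ^ 2 * (1 + 2 * a) := by
        nlinarith [mul_le_mul_of_nonneg_left hab2 (mul_nonneg ha.le hb.le)]
      nlinarith [key, mul_nonneg (mul_nonneg (sq_nonneg b) (sq_nonneg a)) (sub_nonneg.mpr hc)]
    have : (1 - a) * (1 / (3 * a ^ 2)) ≤ (1 - a) * x :=
      mul_le_mul_of_nonneg_left hl (by linarith)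
    linarith
  · have step2 : (1 - a) * (1 / a ^ 2) + a * (1 - c) * (1 - a) / a ^ 2 + c / a
        ≤ 1 / b ^ 2 := by
      have hcomb : (1 - a) * (1 / a ^ 2) + a * (1 - c) * (1 - a) / a ^ 2 + c / a
          = ((1 - a) + a * (1 - c) * (1 - a) + c * a) / a ^ 2 := by
        field_simp
      rw [hcomb, div_le_div_iff₀ (by positivity) (by positivity)]
      have h1 : b * (c - 1) ≤ 1 := by nlinarith
      nlinarith [mul_le_mul_of_nonneg_left h1 hb.le, mul_nonneg (sq_nonneg a) hb.le,
        mul_nonneg (mul_nonneg hb.le hb.le) (mul_nonneg hb.le (sub_nonneg.mpr (by nlinarith : b * (c-1) ≤ 1)))]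
    have : (1 - a) * x ≤ (1 - a) * (1 / a ^ 2) :=
      mul_le_mul_of_nonneg_left hu (by linarith)
    linarith

theorem stmt_14 (c : ℝ) (hc : 1 ≤ c) (θ0 : ℝ) (hθ0 : θ0 = 1 / c)
    (θ : ℕ → ℝ) (hθinit : θ 0 = θ0)
    (hθrec : ∀ k : ℕ, θ (k + 1) = (Real.sqrt ((θ k) ^ 4 + 4 * (θ k) ^ 2) - (θ k) ^ 2) / 2)
    (hθpos : ∀ k : ℕ, 0 < θ k)
    (γ : ℕ → ℕ → ℝ)
    (hγ00 : γ 0 0 = 1) (hγ10 : γ 1 0 = 0) (hγ11 : γ 1 1 = 1)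
    (hγrec : ∀ k : ℕ, 1 ≤ k → ∀ i : ℕ, i ≤ k - 1 → γ (k + 1) i = (1 - θ k) * γ k i)
    (hγk : ∀ k : ℕ, 1 ≤ k →
      γ (k + 1) k = θ k * (1 - c * θ (k - 1)) + c * (θ (k - 1) - θ k))
    (hγk1 : ∀ k : ℕ, 1 ≤ k → γ (k + 1) (k + 1) = c * θ k)
    (ξ : ℕ → ℝ)
    (hξ : ∀ k : ℕ, ξ k = ∑ i ∈ Finset.range (k + 1),
      γ k i * (if i = 0 then (1 - θ0) / θ0 ^ 2 else 1 / (θ (i - 1)) ^ 2))  :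
    ∀ k : ℕ, 1 ≤ k → 1 / (3 * (θ k) ^ 2) ≤ ξ k ∧ ξ k ≤ 1 / (θ k) ^ 2 := by
  have hc0 : (0:ℝ) < c := lt_of_lt_of_le one_pos hc
  have hcne : c ≠ 0 := ne_of_gt hc0
  have hθ0pos : 0 < θ0 := by rw [hθ0]; positivity
  have hθ0le1 : θ0 ≤ 1 := by rw [hθ0, div_le_one hc0]; exact hc
  -- key identity for θ
  have hid : ∀ k : ℕ, θ (k+1) ^ 2 + θ k ^ 2 * θ (k+1) = θ k ^ 2 := by
    intro k
    have hnn : (0:ℝ) ≤ θ k ^ 4 + 4 * θ k ^ 2 := by positivity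
    have hs : Real.sqrt (θ k ^ 4 + 4 * θ k ^ 2) ^ 2 = θ k ^ 4 + 4 * θ k ^ 2 :=
      Real.sq_sqrt hnn
    rw [hθrec k]
    nlinarith [hs]
  have hlt1 : ∀ k : ℕ, θ (k+1) < 1 := by
    intro k
    nlinarith [hid k, hθpos (k+1), hθpos k,
      mul_pos (mul_pos (hθpos k) (hθpos k)) (hθpos (k+1)),
      mul_pos (hθpos (k+1)) (hθpos (k+1))]
  have hle1 : ∀ k : ℕ, θ k ≤ 1 := by
    intro k
    cases k with
    | zero => rw [hθinit]; exact hθ0le1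
    | succ n => exact (hlt1 n).le
  have hdec : ∀ k : ℕ, θ (k+1) ≤ θ k := by
    intro k
    nlinarith [hid k, hθpos k, hθpos (k+1),
      mul_pos (mul_pos (hθpos k) (hθpos k)) (hθpos (k+1))]
  have hmono : ∀ k : ℕ, θ k ≤ 1 / c := by
    intro k
    induction k with
    | zero => rw [hθinit, hθ0]
    | succ n ih => exact le_trans (hdec n) ih
  have hγdiag : ∀ m : ℕ, γ (m+1) (m+1) = c * θ m := by
    intro m
    cases m with
    | zero => rw [hγ11, hθinit, hθ0]; field_simp
    | succ n => exact hγk1 (n+1) (by omega)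
  -- recurrence for ξ
  have hξrec : ∀ m : ℕ, ξ (m+2) = (1 - θ (m+1)) * ξ (m+1)
      + θ (m+1) * (1 - c) / θ m ^ 2 + c / θ (m+1) := by
    intro m
    have hθmne : θ m ≠ 0 := ne_of_gt (hθpos m)
    have hθm1ne : θ (m+1) ≠ 0 := ne_of_gt (hθpos (m+1))
    have h1 : ξ (m+2) = (∑ i ∈ Finset.range (m+1), γ (m+2) i *
        (if i = 0 then (1 - θ0) / θ0 ^ 2 else 1 / (θ (i - 1)) ^ 2))
        + γ (m+2) (m+1) * (1 / θ m ^ 2) + γ (m+2) (m+2) * (1 / θ (m+1) ^ 2) := by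
      rw [hξ (m+2), Finset.sum_range_succ, Finset.sum_range_succ]
      norm_num
    have h2 : (∑ i ∈ Finset.range (m+1), γ (m+2) i *
        (if i = 0 then (1 - θ0) / θ0 ^ 2 else 1 / (θ (i - 1)) ^ 2))
        = (1 - θ (m+1)) * (∑ i ∈ Finset.range (m+1), γ (m+1) i *
        (if i = 0 then (1 - θ0) / θ0 ^ 2 else 1 / (θ (i - 1)) ^ 2)) := by
      rw [Finset.mul_sum]
      refine Finset.sum_congr rfl ?_
      intro i hi
      rw [Finset.mem_range] at hi
      rw [hγrec (m+1) (by omega) i (by omega)]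
      ring
    have h3 : ξ (m+1) = (∑ i ∈ Finset.range (m+1), γ (m+1) i *
        (if i = 0 then (1 - θ0) / θ0 ^ 2 else 1 / (θ (i - 1)) ^ 2))
        + γ (m+1) (m+1) * (1 / θ m ^ 2) := by
      rw [hξ (m+1), Finset.sum_range_succ]
      norm_num
    have h4 : γ (m+2) (m+1) = θ (m+1) * (1 - c * θ m) + c * (θ m - θ (m+1)) := by
      simpa using hγk (m+1) (by omega)
    have h5 : γ (m+2) (m+2) = c * θ (m+1) := hγk1 (m+1) (by omega)
    rw [h2, h4, h5] at h1
    rw [h1, h3, hγdiag m]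
    field_simp
    ring
  -- main induction
  intro k hk
  induction k, hk using Nat.le_induction with
  | base =>
    have hξ1 : ξ 1 = 1 / θ0 ^ 2 := by
      rw [hξ 1, Finset.sum_range_succ, Finset.sum_range_succ,
        Finset.sum_range_zero, hγ10, hγ11]
      norm_num [hθinit]
    have h1 : θ 1 ^ 2 + θ0 ^ 2 * θ 1 = θ0 ^ 2 := by
      have h := hid 0; rw [hθinit] at h; exact h
    have hp1 := hθpos 1
    constructor
    · have hθ1lt : θ 1 < 1 := hlt1 0
      have hθ0sq : θ0 ^ 2 ≤ 1 := by nlinarith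
      have key : θ0 ^ 2 * θ 1 ≤ θ 1 := by nlinarith
      rw [hξ1, div_le_div_iff₀ (by positivity) (by positivity)]
      nlinarith [h1, key, hp1, hθ1lt, mul_pos hp1 hp1, sq_nonneg (θ 1)]
    · rw [hξ1, div_le_div_iff₀ (by positivity) (by positivity)]
      nlinarith
  | succ n hn ih =>
    obtain ⟨m, rfl⟩ : ∃ m, n = m + 1 := ⟨n - 1, by omega⟩
    obtain ⟨ihl, ihu⟩ := ih
    have hap : 0 < θ (m+1) := hθpos (m+1)
    have hbp : 0 < θ (m+2) := hθpos (m+2)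
    have hpp : 0 < θ m := hθpos m
    have ha1 : θ (m+1) < 1 := hlt1 m
    have hida : θ (m+1) ^ 2 + θ m ^ 2 * θ (m+1) = θ m ^ 2 := hid m
    have hidb : θ (m+2) ^ 2 + θ (m+1) ^ 2 * θ (m+2) = θ (m+1) ^ 2 := hid (m+1)
    have hcb : c * θ (m+2) ≤ 1 := by
      have h := hmono (m+2)
      calc c * θ (m+2) ≤ c * (1/c) := mul_le_mul_of_nonneg_left h hc0.le
        _ = 1 := by field_simp
    have hrec := hξrec m
    have hpa : θ (m+1) * (1 - c) / θ m ^ 2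
        = θ (m+1) * (1 - c) * (1 - θ (m+1)) / θ (m+1) ^ 2 := by
      rw [div_eq_div_iff (by positivity) (by positivity)]
      linear_combination θ (m+1) * (1 - c) * hida
    rw [hpa] at hrec
    obtain ⟨hL, hU⟩ := aux_step c (θ (m+1)) (θ (m+2)) hc hap hbp ha1 hidb hcb
      (ξ (m+1)) ihl ihu
    constructor
    · linarith
    · linarith
end

section
/- For every k ≥ 1 one has (k + 2/θ0)²/12 ≤ ξ_k ≤ (k + 1/θ0)². -/
set_option maxHeartbeats 1600000 in
theorem stmt_15 (c : ℝ) (hc : 1 ≤ c) (θ0 : ℝ) (hθ0 : θ0 = 1 / c)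
    (θ : ℕ → ℝ) (hθinit : θ 0 = θ0)
    (hθrec : ∀ k : ℕ, θ (k + 1) = (Real.sqrt ((θ k) ^ 4 + 4 * (θ k) ^ 2) - (θ k) ^ 2) / 2)
    (hθpos : ∀ k : ℕ, 0 < θ k)
    (γ : ℕ → ℕ → ℝ)
    (hγ00 : γ 0 0 = 1) (hγ10 : γ 1 0 = 0) (hγ11 : γ 1 1 = 1)
    (hγrec : ∀ k : ℕ, 1 ≤ k → ∀ i : ℕ, i ≤ k - 1 → γ (k + 1) i = (1 - θ k) * γ k i)
    (hγk : ∀ k : ℕ, 1 ≤ k →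
      γ (k + 1) k = θ k * (1 - c * θ (k - 1)) + c * (θ (k - 1) - θ k))
    (hγk1 : ∀ k : ℕ, 1 ≤ k → γ (k + 1) (k + 1) = c * θ k)
    (ξ : ℕ → ℝ)
    (hξ : ∀ k : ℕ, ξ k = ∑ i ∈ Finset.range (k + 1),
      γ k i * (if i = 0 then (1 - θ0) / θ0 ^ 2 else 1 / (θ (i - 1)) ^ 2))  :
    ∀ k : ℕ, 1 ≤ k → ((k : ℝ) + 2 / θ0) ^ 2 / 12 ≤ ξ k ∧ ξ k ≤ ((k : ℝ) + 1 / θ0) ^ 2 := by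
  have hc0 : 0 < c := lt_of_lt_of_le one_pos hc
  have hθ0inv : 1 / θ0 = c := by rw [hθ0]; field_simp
  have hθ0inv2 : 2 / θ0 = 2 * c := by rw [hθ0]; field_simp
  -- key square identity
  have hsq : ∀ k, θ (k + 1) ^ 2 = θ k ^ 2 * (1 - θ (k + 1)) := by
    intro k
    have h4 : (0:ℝ) ≤ (θ k) ^ 4 + 4 * (θ k) ^ 2 := by positivity
    have hs : (Real.sqrt ((θ k) ^ 4 + 4 * (θ k) ^ 2)) ^ 2 = (θ k) ^ 4 + 4 * (θ k) ^ 2 :=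
      Real.sq_sqrt h4
    rw [hθrec k]
    linear_combination hs / 4
  -- bounds on 1/θ k
  have hbounds : ∀ k : ℕ, c + (k : ℝ) / 2 ≤ 1 / θ k ∧ 1 / θ k ≤ c + (k : ℝ) := by
    intro k
    induction k with
    | zero =>
      simp [hθinit, hθ0inv]
    | succ n ih =>
      obtain ⟨ih1, ih2⟩ := ih
      have ha : 0 < θ n := hθpos n
      have hb : 0 < θ (n + 1) := hθpos (n + 1)
      have hu1 : (1:ℝ) ≤ 1 / θ n := le_trans (by nlinarith [Nat.cast_nonneg (α := ℝ) n]) ih1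
      have hsqn := hsq n
      -- v^2 = u^2 + v with u = 1/θ n, v = 1/θ (n+1)
      have hv : (1 / θ (n + 1)) ^ 2 = (1 / θ n) ^ 2 + 1 / θ (n + 1) := by
        have h1 : 1 - θ (n + 1) = θ (n + 1) ^ 2 / θ n ^ 2 := by
          field_simp at hsqn ⊢
          linarith [hsqn]
        field_simp
        nlinarith [hsqn]
      set u := 1 / θ n with hudef
      set v := 1 / θ (n + 1) with hvdef
      have hupos : 0 < u := by positivity
      have hvpos : 0 < v := by positivity
      have hvu : u ≤ v := by nlinarith [hv]
      constructor
      · have hstep : u + 1 / 2 ≤ v := by nlinarith [hv, hvu]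
        push_cast
        linarith
      · have hstep : v ≤ u + 1 := by nlinarith [hv, hupos, hvpos]
        push_cast
        linarith
  have hθle1 : ∀ k, θ k ≤ 1 := by
    intro k
    have h := (hbounds k).1
    have hp := hθpos k
    have : (1:ℝ) ≤ 1 / θ k := le_trans (by nlinarith [Nat.cast_nonneg (α := ℝ) k]) h
    rw [le_div_iff₀ hp] at this
    linarith
  -- gamma diagonal
  have hγdiag : ∀ m : ℕ, γ (m + 1) (m + 1) = c * θ m := by
    intro m
    match m with
    | 0 => rw [hγ11, hθinit, hθ0]; field_simp
    | n + 1 => have := hγk1 (n + 1) (by omega); simpa using this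
  -- xi recurrence
  have hξrec : ∀ m : ℕ, ξ (m + 2) = (1 - θ (m + 1)) * ξ (m + 1) + 1 / θ (m + 1) + c - 1 := by
    intro m
    have ha : 0 < θ m := hθpos m
    have hb : 0 < θ (m + 1) := hθpos (m + 1)
    rw [hξ (m + 2), hξ (m + 1)]
    rw [Finset.sum_range_succ, Finset.sum_range_succ, Finset.sum_range_succ (n := m + 1)]
    have hsum : ∑ i ∈ Finset.range (m + 1),
        γ (m + 2) i * (if i = 0 then (1 - θ0) / θ0 ^ 2 else 1 / (θ (i - 1)) ^ 2)
        = (1 - θ (m + 1)) * ∑ i ∈ Finset.range (m + 1),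
        γ (m + 1) i * (if i = 0 then (1 - θ0) / θ0 ^ 2 else 1 / (θ (i - 1)) ^ 2) := by
      rw [Finset.mul_sum]
      apply Finset.sum_congr rfl
      intro i hi
      have hi' : i ≤ (m + 1) - 1 := by
        simp only [Finset.mem_range] at hi; omega
      rw [hγrec (m + 1) (by omega) i hi']
      ring
    rw [hsum]
    have hγa : γ (m + 2) (m + 1) = θ (m + 1) * (1 - c * θ m) + c * (θ m - θ (m + 1)) := by
      have := hγk (m + 1) (by omega); simpa using this
    have hγb : γ (m + 2) (m + 2) = c * θ (m + 1) := hγdiag (m + 1)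
    have hγc : γ (m + 1) (m + 1) = c * θ m := hγdiag m
    rw [hγa, hγb, hγc]
    simp only [if_neg (by omega : ¬ m + 1 = 0), if_neg (by omega : ¬ m + 2 = 0)]
    have hidx1 : (m + 1 : ℕ) - 1 = m := by omega
    have hidx2 : (m + 2 : ℕ) - 1 = m + 1 := by omega
    rw [hidx1, hidx2]
    have hsqm := hsq m
    set S := ∑ i ∈ Finset.range (m + 1),
      γ (m + 1) i * (if i = 0 then (1 - θ0) / θ0 ^ 2 else 1 / (θ (i - 1)) ^ 2) with hS
    have h1b : 0 < 1 - θ (m + 1) := by nlinarith [hsqm, sq_nonneg (θ (m + 1))]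
    have hinv : 1 / θ m ^ 2 = (1 - θ (m + 1)) / θ (m + 1) ^ 2 := by
      rw [hsqm]
      rw [div_mul_eq_div_div_swap, div_self h1b.ne']
    have key : (1 - θ (m + 1)) * S +
        (θ (m + 1) * (1 - c * θ m) + c * (θ m - θ (m + 1))) * (1 / θ m ^ 2) +
        c * θ (m + 1) * (1 / θ (m + 1) ^ 2)
        = (1 - θ (m + 1)) * (S + c * θ m * (1 / θ m ^ 2)) + 1 / θ (m + 1) + c - 1 := by
      rw [hinv]
      field_simp
      ring
    linear_combination key
  -- base case value
  have hξ1 : ξ 1 = c ^ 2 := by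
    rw [hξ 1]
    rw [Finset.sum_range_succ, Finset.sum_range_succ, Finset.sum_range_zero]
    simp only [hγ10, hγ11, if_neg (by omega : ¬ (1:ℕ) = 0), if_pos rfl]
    norm_num [hθinit, hθ0]
  -- main induction
  intro k hk
  induction k, hk using Nat.le_induction with
  | base =>
    rw [hξ1, hθ0inv, hθ0inv2]
    push_cast
    constructor
    · nlinarith
    · nlinarith
  | succ n hn ih =>
    obtain ⟨ih1, ih2⟩ := ih
    obtain ⟨m, rfl⟩ : ∃ m, n = m + 1 := ⟨n - 1, by omega⟩
    have hrec := hξrec m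
    have hb : 0 < θ (m + 1) := hθpos (m + 1)
    have hb1 : θ (m + 1) ≤ 1 := hθle1 (m + 1)
    obtain ⟨hlb, hub⟩ := hbounds (m + 1)
    have hlb' : (c + ((m + 1 : ℕ) : ℝ) / 2) * θ (m + 1) ≤ 1 := by
      rw [← le_div_iff₀ hb]; exact hlb
    have hub' : 1 ≤ (c + ((m + 1 : ℕ) : ℝ)) * θ (m + 1) := by
      rw [← div_le_iff₀ hb]; exact hub
    simp only [hθ0inv, hθ0inv2] at ih1 ih2 ⊢
    rw [hrec]
    have hm : (0:ℝ) ≤ (m : ℝ) := Nat.cast_nonneg m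
    push_cast at ih1 ih2 hlb hub hlb' hub' ⊢
    constructor
    · nlinarith [mul_nonneg (by linarith : (0:ℝ) ≤ 1 - θ (m + 1))
        (by linarith : (0:ℝ) ≤ ξ (m + 1) - ((m : ℝ) + 1 + 2 * c) ^ 2 / 12),
        mul_nonneg (mul_nonneg hb.le (by linarith : (0:ℝ) ≤ (m:ℝ) + 1 + 2 * c)) hm,
        hb.le, hlb']
    · nlinarith [mul_nonneg (by linarith : (0:ℝ) ≤ 1 - θ (m + 1))
        (by linarith : (0:ℝ) ≤ ((m : ℝ) + 1 + c) ^ 2 - ξ (m + 1)),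
        hb.le, hub]
end

section
/- Let μ, λ be real numbers with 0 < μ ≤ λ, and let K = ⌈(2√3/θ0)·√(λ/μ) − 2/θ0⌉ (a natural number, and K ≥ 1). Then λ ≤ μ·θ0²·ξ_K ≤ 12·λ, and K ≤ 2√3·√λ/(θ0·√μ). -/
private lemma stmt16_key (c x y S : ℝ) (hx : 0 < x) (hy : 0 < y)
    (hr : x^2 = y^2 + x^2*y) :
    (1-y)*S + (y*(1-c*x)+c*(x-y))*(1/x^2) + c*y*(1/x^2+1/y)
      = (1-y)*(S + c*x*(1/x^2)) + 1/y + c - 1 := by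
  have hx0 : x ≠ 0 := ne_of_gt hx
  have hy0 : y ≠ 0 := ne_of_gt hy
  field_simp
  linear_combination (-1:ℝ) * hr

set_option maxHeartbeats 2000000 in
theorem stmt_16 (c : ℝ) (hc : 1 ≤ c) (θ0 : ℝ) (hθ0 : θ0 = 1 / c)
    (θ : ℕ → ℝ) (hθinit : θ 0 = θ0)
    (hθrec : ∀ k : ℕ, θ (k + 1) = (Real.sqrt ((θ k) ^ 4 + 4 * (θ k) ^ 2) - (θ k) ^ 2) / 2)
    (hθpos : ∀ k : ℕ, 0 < θ k)
    (γ : ℕ → ℕ → ℝ)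
    (hγ00 : γ 0 0 = 1) (hγ10 : γ 1 0 = 0) (hγ11 : γ 1 1 = 1)
    (hγrec : ∀ k : ℕ, 1 ≤ k → ∀ i : ℕ, i ≤ k - 1 → γ (k + 1) i = (1 - θ k) * γ k i)
    (hγk : ∀ k : ℕ, 1 ≤ k →
      γ (k + 1) k = θ k * (1 - c * θ (k - 1)) + c * (θ (k - 1) - θ k))
    (hγk1 : ∀ k : ℕ, 1 ≤ k → γ (k + 1) (k + 1) = c * θ k)
    (ξ : ℕ → ℝ)
    (hξ : ∀ k : ℕ, ξ k = ∑ i ∈ Finset.range (k + 1),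
      γ k i * (if i = 0 then (1 - θ0) / θ0 ^ 2 else 1 / (θ (i - 1)) ^ 2)) (μ lam : ℝ) (hμ : 0 < μ) (hμlam : μ ≤ lam)
    (K : ℕ) (hK : K = ⌈(2 * Real.sqrt 3 / θ0) * Real.sqrt (lam / μ) - 2 / θ0⌉₊) :
    1 ≤ K ∧
      (lam ≤ μ * θ0 ^ 2 * ξ K ∧ μ * θ0 ^ 2 * ξ K ≤ 12 * lam) ∧
      (K : ℝ) ≤ 2 * Real.sqrt 3 * Real.sqrt lam / (θ0 * Real.sqrt μ) := by
  have hc0 : (0:ℝ) < c := lt_of_lt_of_le one_pos hc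
  have hθ0pos : 0 < θ0 := by rw [hθ0]; positivity
  have hcθ0 : c * θ0 = 1 := by rw [hθ0]; field_simp
  have hθ0le1 : θ0 ≤ 1 := by
    rw [hθ0]; rw [div_le_one hc0]; exact hc
  -- θ identity : θ(k+1)^2 + θ k^2 * θ(k+1) = θ k ^ 2
  have hsq : ∀ k, θ (k+1)^2 + θ k^2 * θ (k+1) = θ k ^ 2 := by
    intro k
    have h1 : Real.sqrt ((θ k)^4 + 4*(θ k)^2) = 2 * θ (k+1) + (θ k)^2 := by
      have := hθrec k; linarith
    have h2 : (Real.sqrt ((θ k)^4 + 4*(θ k)^2))^2 = (θ k)^4 + 4*(θ k)^2 :=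
      Real.sq_sqrt (by positivity)
    rw [h1] at h2
    nlinarith [h2]
  have hinv : ∀ k, 1 / θ (k+1)^2 = 1 / θ k^2 + 1 / θ (k+1) := by
    intro k
    have hk := hθpos k; have hk1 := hθpos (k+1)
    have h := hsq k
    field_simp
    nlinarith [h, hk, hk1]
  -- bounds on 1/θ k
  have hu : ∀ k : ℕ, c + k/2 ≤ 1/θ k ∧ 1/θ k ≤ c + k := by
    intro k
    induction k with
    | zero =>
      have : 1 / θ 0 = c := by rw [hθinit, hθ0]; field_simp
      rw [this]; norm_num
    | succ n ih =>
      have hup := hθpos n; have hvp := hθpos (n+1)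
      set u := 1/θ n with hudef
      set v := 1/θ (n+1) with hvdef
      have hupos : 0 < u := by positivity
      have hvpos : 0 < v := by positivity
      have hkey : v^2 = u^2 + v := by
        have h := hinv n
        simp only [hudef, hvdef, div_pow, one_pow]
        exact h
      have hu1 : 1 ≤ u := by
        have := ih.1
        have : c ≤ u := by
          have hn : (0:ℝ) ≤ (n:ℝ)/2 := by positivity
          linarith [ih.1]
        linarith
      constructor
      · have h4 : (v - u - 1/2)*(v + u - 1/2) = 1/4 := by linear_combination hkey
        have h5 : u + 1/2 ≤ v := by
          by_contra hcon
          push_neg at hcon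
          nlinarith [h4, hupos, hvpos]
        push_cast
        linarith [ih.1]
      · have h4 : (v - u - 1)*(v + u) = -u := by linear_combination hkey
        have h5 : v ≤ u + 1 := by
          by_contra hcon
          push_neg at hcon
          nlinarith [h4, hupos, hvpos]
        push_cast
        linarith [ih.2]
  -- diagonal of γ
  have hγdiag : ∀ k : ℕ, 1 ≤ k → γ k k = c * θ (k-1) := by
    intro k hk
    match k, hk with
    | 1, _ => simp [hγ11, hθinit]; linarith [hcθ0]
    | (n+2), _ =>
      have := hγk1 (n+1) (by omega)
      simpa using this
  -- ξ 1
  have hξ1 : ξ 1 = 1/θ0^2 := by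
    rw [hξ 1]
    rw [Finset.sum_range_succ, Finset.sum_range_succ, Finset.sum_range_zero]
    simp [hγ10, hγ11, hθinit]
  -- ξ recurrence
  have hξrec : ∀ k : ℕ, 1 ≤ k → ξ (k+1) = (1 - θ k) * ξ k + 1/θ k + c - 1 := by
    intro k hk
    obtain ⟨m, rfl⟩ : ∃ m, k = m + 1 := ⟨k - 1, by omega⟩
    set a : ℕ → ℝ := fun i => if i = 0 then (1 - θ0) / θ0 ^ 2 else 1 / (θ (i - 1)) ^ 2 with ha
    have hξk1 : ξ (m+2) = ∑ i ∈ Finset.range (m+1), γ (m+2) i * a i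
        + γ (m+2) (m+1) * a (m+1) + γ (m+2) (m+2) * a (m+2) := by
      rw [hξ (m+2), Finset.sum_range_succ, Finset.sum_range_succ]
    have hξk : ξ (m+1) = ∑ i ∈ Finset.range (m+1), γ (m+1) i * a i
        + γ (m+1) (m+1) * a (m+1) := by
      rw [hξ (m+1), Finset.sum_range_succ]
    have hsum : ∑ i ∈ Finset.range (m+1), γ (m+2) i * a i
        = (1 - θ (m+1)) * ∑ i ∈ Finset.range (m+1), γ (m+1) i * a i := by
      rw [Finset.mul_sum]
      apply Finset.sum_congr rfl
      intro i hi
      rw [Finset.mem_range] at hi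
      rw [hγrec (m+1) (by omega) i (by omega)]
      ring
    have hdiag : γ (m+1) (m+1) = c * θ m := by
      have := hγdiag (m+1) (by omega); simpa using this
    have hmid : γ (m+2) (m+1) = θ (m+1) * (1 - c * θ m) + c * (θ m - θ (m+1)) := by
      have := hγk (m+1) (by omega); simpa using this
    have htop : γ (m+2) (m+2) = c * θ (m+1) := hγk1 (m+1) (by omega)
    have ham1 : a (m+1) = 1 / θ m ^ 2 := by simp [ha]
    have ham2 : a (m+2) = 1 / θ (m+1) ^ 2 := by simp [ha]
    have hi2 : 1 / θ (m+1) ^ 2 = 1 / θ m ^ 2 + 1 / θ (m+1) := hinv m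
    have hp := hθpos m; have hp1 := hθpos (m+1)
    have hrel : θ m^2 = θ (m+1)^2 + θ m^2 * θ (m+1) := by linarith [hsq m]
    rw [hξk1, hsum, hmid, htop, ham1, ham2, hi2]
    rw [hξk, hdiag, ham1]
    exact stmt16_key c (θ m) (θ (m+1)) _ hp hp1 hrel
  -- bounds on ξ
  have hbound : ∀ k : ℕ, 1 ≤ k → ((k:ℝ) + 2*c)^2/12 ≤ ξ k ∧ ξ k ≤ ((k:ℝ) + c)^2 := by
    intro k hk
    induction k, hk using Nat.le_induction with
    | base =>
      have hc0' : c ≠ 0 := ne_of_gt hc0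
      have hξ1' : ξ 1 = c^2 := by rw [hξ1, hθ0]; field_simp
      rw [hξ1']
      push_cast
      constructor
      · nlinarith [hc, sq_nonneg (c-1)]
      · nlinarith [hc]
    | succ n hn1 ih =>
      · have hrec := hξrec n hn1
        have hub := (hu n).2
        have hlb := (hu n).1
        have hp := hθpos n
        have hinv1 : θ n * (1/θ n) = 1 := by field_simp
        have hnnn : (0:ℝ) ≤ (n:ℝ) := Nat.cast_nonneg n
        have hθu : θ n * (c + (n:ℝ)/2) ≤ 1 := by
          have h := mul_le_mul_of_nonneg_left hlb (le_of_lt hp)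
          linarith [h, hinv1]
        have hθle1 : θ n ≤ 1 := by nlinarith [hθu, hp, hc, hnnn]
        have hn2c : (0:ℝ) ≤ (n:ℝ) + 2*c := by positivity
        have h2 : θ n * ((n:ℝ)+2*c)^2 ≤ 2*((n:ℝ)+2*c) := by nlinarith [hθu, hn2c, hp.le]
        have h1 : (1 - θ n) * (((n:ℝ)+2*c)^2/12) ≤ (1 - θ n) * ξ n :=
          mul_le_mul_of_nonneg_left ih.1 (by linarith)
        have h3 : (1 - θ n) * ξ n ≤ ξ n := by
          have hξnn : 0 ≤ ξ n := le_trans (by positivity) ih.1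
          nlinarith [hp, hξnn]
        constructor
        · push_cast
          nlinarith [h1, h2, hlb, hrec, hc]
        · push_cast
          nlinarith [h3, hub, hrec, hc, ih.2]
  -- final stage
  set r3 := Real.sqrt 3 with hr3def
  set s := Real.sqrt (lam/μ) with hsdef
  have hlamμ : (1:ℝ) ≤ lam/μ := (one_le_div hμ).mpr hμlam
  have hs2 : s^2 = lam/μ := Real.sq_sqrt (by linarith)
  have hsnn : 0 ≤ s := Real.sqrt_nonneg _
  have hs1 : 1 ≤ s := by nlinarith [hs2, hsnn, hlamμ]
  have hr32 : r3^2 = 3 := Real.sq_sqrt (by norm_num)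
  have hr3nn : 0 ≤ r3 := Real.sqrt_nonneg _
  have hr31 : 1 < r3 := by nlinarith [hr32, hr3nn]
  have hxeq : 2*r3/θ0*s - 2/θ0 = (2*(r3*s) - 2)/θ0 := by ring
  have hx : 0 < 2*r3/θ0*s - 2/θ0 := by
    rw [hxeq]
    apply div_pos _ hθ0pos
    nlinarith [hr31, hs1]
  have hK1 : 1 ≤ K := by rw [hK]; exact Nat.one_le_ceil_iff.mpr hx
  have hKge : 2*r3/θ0*s - 2/θ0 ≤ (K:ℝ) := by rw [hK]; exact Nat.le_ceil _
  have hKlt : (K:ℝ) < 2*r3/θ0*s - 2/θ0 + 1 := by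
    rw [hK]; exact Nat.ceil_lt_add_one hx.le
  have hlamval : μ * s^2 = lam := by rw [hs2]; field_simp
  have hξb := hbound K hK1
  have hKnn : (0:ℝ) ≤ (K:ℝ) := Nat.cast_nonneg K
  refine ⟨hK1, ⟨?_, ?_⟩, ?_⟩
  · -- lam ≤ μ θ0² ξ K
    have h5 : 2*r3*s ≤ θ0*K + 2 := by
      have := mul_le_mul_of_nonneg_left hKge hθ0pos.le
      rw [hxeq] at this
      rw [mul_div_assoc'] at this
      rw [mul_div_cancel_left₀ _ (ne_of_gt hθ0pos)] at this
      linarith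
    have hb0 : (0:ℝ) ≤ 2*r3*s := by positivity
    have he : (2*r3*s)^2 = 12*s^2 := by linear_combination (4*s^2) * hr32
    have h6 : 12*s^2 ≤ (θ0*K+2)^2 := by
      nlinarith [mul_self_le_mul_self hb0 h5, he]
    have e1 : θ0^2*((K:ℝ)+2*c)^2 = (θ0*K+2)^2 := by
      linear_combination (4*θ0*(K:ℝ) + 4*c*θ0 + 4) * hcθ0
    have h7 : μ*θ0^2*(((K:ℝ)+2*c)^2/12) ≤ μ*θ0^2*ξ K :=
      mul_le_mul_of_nonneg_left hξb.1 (by positivity)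
    have h8 : μ*(12*s^2) ≤ μ*((θ0*K+2)^2) := mul_le_mul_of_nonneg_left h6 hμ.le
    calc lam = μ*s^2 := hlamval.symm
      _ ≤ μ*((θ0*K+2)^2)/12 := by linarith
      _ = μ*θ0^2*(((K:ℝ)+2*c)^2/12) := by rw [← e1]; ring
      _ ≤ μ*θ0^2*ξ K := h7
  · -- μ θ0² ξ K ≤ 12 lam
    have h5 : θ0*K + 1 ≤ 2*r3*s := by
      have := mul_le_mul_of_nonneg_left hKlt.le hθ0pos.le
      rw [mul_add, mul_one, hxeq, mul_div_assoc', mul_div_cancel_left₀ _ (ne_of_gt hθ0pos)] at this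
      linarith
    have hb0 : (0:ℝ) ≤ θ0*K+1 := by positivity
    have he : (2*r3*s)^2 = 12*s^2 := by linear_combination (4*s^2) * hr32
    have h6 : (θ0*K+1)^2 ≤ 12*s^2 := by
      nlinarith [mul_self_le_mul_self hb0 h5, he]
    have e1 : θ0^2*((K:ℝ)+c)^2 = (θ0*K+1)^2 := by
      linear_combination (2*θ0*(K:ℝ) + c*θ0 + 1) * hcθ0
    have h7 : μ*θ0^2*ξ K ≤ μ*θ0^2*(((K:ℝ)+c)^2) :=
      mul_le_mul_of_nonneg_left hξb.2 (by positivity)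
    calc μ*θ0^2*ξ K ≤ μ*θ0^2*(((K:ℝ)+c)^2) := h7
      _ = μ*((θ0*K+1)^2) := by rw [mul_assoc, e1]
      _ ≤ μ*(12*s^2) := mul_le_mul_of_nonneg_left h6 hμ.le
      _ = 12*lam := by rw [← hlamval]; ring
  · -- K ≤ 2√3 √lam/(θ0 √μ)
    have hμnn : (0:ℝ) ≤ μ := hμ.le
    have hlamnn : (0:ℝ) ≤ lam := by linarith
    have hsdiv : s = Real.sqrt lam / Real.sqrt μ := by
      rw [hsdef, Real.sqrt_div hlamnn]
    have hrhs : 2 * r3 * Real.sqrt lam / (θ0 * Real.sqrt μ) = 2*r3/θ0*s := by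
      rw [hsdiv]
      have hμs : Real.sqrt μ ≠ 0 := ne_of_gt (Real.sqrt_pos.mpr hμ)
      field_simp
    rw [hrhs]
    have h8 : (2:ℝ)/θ0 ≥ 2 := by
      rw [ge_iff_le, le_div_iff₀ hθ0pos]; linarith
    linarith [hKlt, h8]
end

section
/- Let θ0 ∈ (0,1], μ > 0, μ_F > 0, λ > 0 and ξ ∈ ℝ with λ ≤ μ·θ0²·ξ and μ·(1−θ0) ≤ λ. Define m(a) = (a·θ0²/(1 + a·(1−θ0)))·(ξ − (1−θ0)/θ0²) for a > 0, and set σ = 1/(1 + m(μ)). Then max(σ, 1 − σ·m(μ_F)) ≤ 1 − min(1, μ_F/μ)·(λ − μ·(1−θ0))/(λ + 1). -/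
theorem stmt_17 (θ0 μ μF lam ξ : ℝ)
    (hθ0pos : 0 < θ0) (hθ0le : θ0 ≤ 1)
    (hμ : 0 < μ) (hμF : 0 < μF) (hlam : 0 < lam)
    (h1 : lam ≤ μ * θ0 ^ 2 * ξ) (h2 : μ * (1 - θ0) ≤ lam)
    (m : ℝ → ℝ)
    (hm : ∀ a : ℝ, 0 < a →
      m a = (a * θ0 ^ 2 / (1 + a * (1 - θ0))) * (ξ - (1 - θ0) / θ0 ^ 2))
    (σ : ℝ) (hσ : σ = 1 / (1 + m μ)) :
    max σ (1 - σ * m μF) ≤ 1 - min 1 (μF / μ) * (lam - μ * (1 - θ0)) / (lam + 1) := by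
  set c : ℝ := ξ - (1 - θ0) / θ0 ^ 2 with hc_def
  set s : ℝ := lam - μ * (1 - θ0) with hs_def
  have hθ2 : (0:ℝ) < θ0 ^ 2 := by positivity
  have hkey : μ * θ0 ^ 2 * c = μ * θ0 ^ 2 * ξ - μ * (1 - θ0) := by
    have h' : θ0 ^ 2 * ((1 - θ0) / θ0 ^ 2) = 1 - θ0 := by field_simp
    rw [hc_def]; linear_combination (-μ) * h'
  have hs0 : 0 ≤ s := by simp only [hs_def]; linarith
  have hA : s ≤ μ * θ0 ^ 2 * c := by rw [hkey]; simp only [hs_def]; linarith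
  have hc0 : 0 ≤ c := by
    nlinarith [mul_pos hμ hθ2]
  set A : ℝ := μ * θ0 ^ 2 * c with hA_def
  set B : ℝ := μF * θ0 ^ 2 * c with hB_def
  set D : ℝ := 1 + μ * (1 - θ0) with hD_def
  set DF : ℝ := 1 + μF * (1 - θ0) with hDF_def
  have h1θ : 0 ≤ 1 - θ0 := by linarith
  have hD0 : 0 < D := by
    have := mul_nonneg hμ.le h1θ; simp only [hD_def]; linarith
  have hDF0 : 0 < DF := by
    have := mul_nonneg hμF.le h1θ; simp only [hDF_def]; linarith
  have hA0 : 0 ≤ A := le_trans hs0 hA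
  have hB0 : 0 ≤ B := by positivity
  have hmμ : m μ = A / D := by rw [hm μ hμ]; rw [div_mul_eq_mul_div]
  have hmμF : m μF = B / DF := by rw [hm μF hμF]; rw [div_mul_eq_mul_div]
  clear_value A B D DF
  have hDA0 : 0 < D + A := by linarith
  have hσ' : σ = D / (D + A) := by
    rw [hσ, hmμ]
    have h1AD : 1 + A / D = (D + A) / D := by field_simp
    rw [h1AD, one_div_div]
  have hσ0 : 0 ≤ σ := by rw [hσ']; positivity
  have hσmμ : σ * m μ = A / (D + A) := by
    rw [hσ', hmμ]
    field_simp
  have hDs : D + s = 1 + lam := by simp only [hD_def, hs_def]; ring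
  set t : ℝ := min 1 (μF / μ) with ht_def
  have ht0 : 0 ≤ t := le_min zero_le_one (by positivity)
  have ht1 : t ≤ 1 := min_le_left _ _
  -- lower bound on σ * m μ
  have hlow : s / (1 + lam) ≤ σ * m μ := by
    rw [hσmμ, ← hDs]
    rw [div_le_div_iff₀ (by linarith) hDA0]
    nlinarith [mul_nonneg (sub_nonneg.mpr hA) hD0.le]
  -- m μF ≥ t * m μ
  have htm : t * m μ ≤ m μF := by
    rw [hmμ, hmμF]
    rcases le_or_gt μ μF with h | h
    · have hmono : A / D ≤ B / DF := by
        rw [div_le_div_iff₀ hD0 hDF0]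
        have : A * DF - B * D = θ0 ^ 2 * c * (μ - μF) := by
          simp only [hA_def, hB_def, hD_def, hDF_def]; ring
        nlinarith [mul_nonneg (mul_nonneg hθ2.le hc0) (sub_nonneg.mpr h)]
      calc t * (A / D) ≤ 1 * (A / D) := by
            apply mul_le_mul_of_nonneg_right ht1 (by positivity)
        _ ≤ B / DF := by rw [one_mul]; exact hmono
    · have ht' : t = μF / μ := min_eq_right (by
        rw [div_le_one hμ]; linarith)
      rw [ht']
      rw [div_mul_div_comm, div_le_div_iff₀ (by positivity) hDF0]
      have : μF * A * DF - B * (μ * D) = μ * μF * θ0 ^ 2 * c * ((μF - μ) * (1 - θ0)) := by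
        simp only [hA_def, hB_def, hD_def, hDF_def]; ring
      have hneg : μ * μF * θ0 ^ 2 * c * ((μF - μ) * (1 - θ0)) ≤ 0 :=
        mul_nonpos_of_nonneg_of_nonpos (by positivity)
          (mul_nonpos_of_nonpos_of_nonneg (by linarith) h1θ)
      linarith
  have hσm1 : σ * m μ + σ = 1 := by
    rw [hσmμ, hσ', ← add_div, add_comm A D, div_self hDA0.ne']
  have hts : t * s / (lam + 1) ≤ t * (σ * m μ) := by
    rw [mul_div_assoc]
    apply mul_le_mul_of_nonneg_left _ ht0
    rw [add_comm lam 1]; exact hlow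
  apply max_le
  · have : s / (1 + lam) ≤ 1 * (σ * m μ) := by rw [one_mul]; exact hlow
    have hts' : t * s / (lam + 1) ≤ σ * m μ := by
      calc t * s / (lam + 1) ≤ t * (σ * m μ) := hts
        _ ≤ 1 * (σ * m μ) := mul_le_mul_of_nonneg_right ht1
            (by rw [hσmμ]; positivity)
        _ = σ * m μ := one_mul _
    simp only [hs_def, ht_def] at hts' ⊢
    linarith
  · have h2' : t * (σ * m μ) ≤ σ * m μF := by
      calc t * (σ * m μ) = σ * (t * m μ) := by ring
        _ ≤ σ * m μF := mul_le_mul_of_nonneg_left htm hσ0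
    have : t * s / (lam + 1) ≤ σ * m μF := le_trans hts h2'
    simp only [hs_def, ht_def] at this ⊢
    linarith
end

section
/- Let θ0 ∈ (0,1], μ ∈ (0,1], μ_F > 0, and let D, ε be real numbers with 0 < ε ≤ D. Set r = min(μ_F/μ, 1)·(1 + μ·θ0)/(2 + μ). If k is a real number with k ≥ (1/θ0)·(6√6·max(1/√μ, √μ/μ_F)·log(D/ε) + 2√3·√(1 + 1/μ)), then (1 − r)^{k·θ0·√μ/(2√3·√(1+μ)) − 1}·D ≤ ε, where the power is a real power. -/
set_option maxHeartbeats 1000000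


theorem stmt_19 (θ0 μ μF D ε : ℝ)
    (hθ0pos : 0 < θ0) (hθ0le : θ0 ≤ 1)
    (hμ0 : 0 < μ) (hμ1 : μ ≤ 1) (hμF : 0 < μF)
    (hε : 0 < ε) (hεD : ε ≤ D)
    (r : ℝ) (hr : r = min (μF / μ) 1 * (1 + μ * θ0) / (2 + μ))
    (k : ℝ)
    (hk : k ≥ (1 / θ0) * (6 * Real.sqrt 6 * max (1 / Real.sqrt μ) (Real.sqrt μ / μF)
        * Real.log (D / ε) + 2 * Real.sqrt 3 * Real.sqrt (1 + 1 / μ))) :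
    (1 - r) ^ (k * θ0 * Real.sqrt μ / (2 * Real.sqrt 3 * Real.sqrt (1 + μ)) - 1) * D
      ≤ ε := by
  have hD : 0 < D := lt_of_lt_of_le hε hεD
  have hsqrt : Real.sqrt (1 + 1/μ) = Real.sqrt (1+μ) / Real.sqrt μ := by
    rw [show (1:ℝ) + 1/μ = (1+μ)/μ by field_simp; ring, Real.sqrt_div (by positivity)]
  rw [hsqrt] at hk
  set L := Real.log (D / ε) with hLdef
  set s := Real.sqrt μ with hsdef
  set t := Real.sqrt (1+μ) with htdef
  set a := Real.sqrt 3 with hadef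
  set b := Real.sqrt 6 with hbdef
  set M := max (1/s) (s/μF) with hMdef
  set m := min (μF/μ) 1 with hmdef
  have hs0 : 0 < s := Real.sqrt_pos.mpr hμ0
  have hs2 : s^2 = μ := Real.sq_sqrt hμ0.le
  have ht0 : 0 < t := Real.sqrt_pos.mpr (by linarith)
  have ht2 : t^2 = 1 + μ := Real.sq_sqrt (by linarith)
  have ha0 : 0 < a := Real.sqrt_pos.mpr (by norm_num)
  have ha2 : a^2 = 3 := Real.sq_sqrt (by norm_num)
  have hb0 : 0 < b := Real.sqrt_pos.mpr (by norm_num)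
  have hb2 : b^2 = 6 := Real.sq_sqrt (by norm_num)
  have hL : 0 ≤ L := Real.log_nonneg ((one_le_div hε).mpr hεD)
  have hm0 : 0 < m := lt_min (div_pos hμF hμ0) one_pos
  have hm1 : m ≤ 1 := min_le_right _ _
  have hM0 : 0 < M := lt_of_lt_of_le (by positivity) (le_max_left _ _)
  have hab : a * t ≤ b := by
    nlinarith [mul_pos ha0 ht0, sq_nonneg (a*t - b), sq_nonneg (a*t + b)]
  -- key min/max fact
  have hMms : 1 ≤ M * m * s := by
    rcases le_total (μF/μ) 1 with h | h
    · have hmeq : m = μF/μ := min_eq_left h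
      have hMge : s/μF ≤ M := le_max_right _ _
      rw [hmeq]
      rw [div_le_iff₀ hμF] at hMge
      have h1 : μ ≤ M * μF * s := by nlinarith
      rw [show M * (μF/μ) * s = M * μF * s / μ by ring, le_div_iff₀ hμ0]
      linarith
    · have hmeq : m = 1 := min_eq_right h
      have hMge : 1/s ≤ M := le_max_left _ _
      rw [hmeq, mul_one]
      rw [div_le_iff₀ hs0] at hMge
      linarith
  have hr0 : 0 < r := by
    rw [hr]
    apply div_pos (mul_pos hm0 (by nlinarith)) (by linarith)
  have hr1 : r < 1 := by
    rw [hr, div_lt_one (by linarith)]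
    have h1 : m * (1 + μ * θ0) ≤ 1 * (1 + μ * θ0) :=
      mul_le_mul_of_nonneg_right hm1 (by nlinarith)
    have h2 : μ * θ0 ≤ μ := by nlinarith
    linarith
  -- key inequality  a*t ≤ r * (3*b*M*s)
  have hc : a * t ≤ r * (3 * b * M * s) := by
    rw [hr, div_mul_eq_mul_div, le_div_iff₀ (by linarith : (0:ℝ) < 2 + μ)]
    have h1 : 3 * b ≤ 3 * b * (M * m * s) := by nlinarith
    have h2 : a * t * (2 + μ) ≤ b * 3 := by
      nlinarith [mul_le_mul hab (by linarith : (2:ℝ) + μ ≤ 3) (by positivity) hb0.le]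
    have h3 : 3 * b * (M * m * s) ≤ 3 * b * (M * m * s) * (1 + μ * θ0) := by
      nlinarith [mul_pos hM0 (mul_pos hm0 hs0), mul_pos hμ0 hθ0pos]
    calc a * t * (2 + μ) ≤ 3 * b := by linarith
      _ ≤ 3 * b * (M * m * s) * (1 + μ * θ0) := by linarith
      _ = m * (1 + μ * θ0) * (3 * b * M * s) := by ring
  -- from hk
  have hkθ : 6 * b * M * L * s + 2 * a * t ≤ k * θ0 * s := by
    have h0 : (6 * b * M * L + 2 * a * (t / s)) ≤ k * θ0 := by
      have := mul_le_mul_of_nonneg_right hk hθ0pos.le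
      calc 6 * b * M * L + 2 * a * (t / s)
          = 1 / θ0 * (6 * b * M * L + 2 * a * (t / s)) * θ0 := by
            field_simp
        _ ≤ k * θ0 := by
            apply mul_le_mul_of_nonneg_right _ hθ0pos.le
            linarith [hk]
    have := mul_le_mul_of_nonneg_right h0 hs0.le
    have hts : t / s * s = t := div_mul_cancel₀ t hs0.ne'
    nlinarith [this]
  have hat0 : 0 < 2 * a * t := by positivity
  have hE0 : 0 ≤ k * θ0 * s / (2 * a * t) - 1 := by
    rw [sub_nonneg, le_div_iff₀ hat0]
    nlinarith [mul_nonneg (mul_nonneg (mul_nonneg (mul_nonneg (by norm_num : (0:ℝ)≤6) hb0.le) hM0.le) hL) hs0.le]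
  have hRE : L ≤ r * (k * θ0 * s / (2 * a * t) - 1) := by
    have hkey : L * (2 * a * t) ≤ r * (k * θ0 * s - 2 * a * t) := by
      have h1 : r * (6 * b * M * L * s) ≤ r * (k * θ0 * s - 2 * a * t) := by
        apply mul_le_mul_of_nonneg_left _ hr0.le
        linarith
      have h2 : L * (a * t) ≤ L * (r * (3 * b * M * s)) :=
        mul_le_mul_of_nonneg_left hc hL
      nlinarith [h1, h2]
    have : L ≤ r * (k * θ0 * s - 2 * a * t) / (2 * a * t) :=
      (le_div_iff₀ hat0).mpr hkey
    calc L ≤ r * (k * θ0 * s - 2 * a * t) / (2 * a * t) := this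
      _ = r * (k * θ0 * s / (2 * a * t) - 1) := by field_simp
  set E := k * θ0 * s / (2 * a * t) - 1 with hEdef
  have hbase : 0 < 1 - r := by linarith
  have hlog : Real.log (1 - r) ≤ -r := by
    have := Real.log_le_sub_one_of_pos hbase
    linarith
  have hstep1 : E * Real.log (1 - r) ≤ -(r * E) := by
    have := mul_le_mul_of_nonneg_left hlog hE0
    nlinarith [this]
  have hstep2 : -(r * E) ≤ -L := by linarith
  calc (1 - r) ^ E * D
      = Real.exp (E * Real.log (1 - r)) * D := by
        rw [Real.rpow_def_of_pos hbase]; ring_nf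
    _ ≤ Real.exp (-L) * D := by
        apply mul_le_mul_of_nonneg_right _ hD.le
        exact Real.exp_le_exp.mpr (by linarith)
    _ = ε := by
        rw [hLdef, ← Real.log_inv, Real.exp_log (by positivity)]
        field_simp
end
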